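/- arXiv:0907.0497 — 3 statements merged into one kernel-verified Lean document; each statement's English description precedes it below -/
import Mathlib

section
/- Let φ₀ = dx¹²³ + dx¹⁴⁵ + dx¹⁶⁷ + dx²⁴⁶ − dx²⁵⁷ − dx³⁴⁷ − dx³⁵⁶ be the standard G₂ 3-form on ℝ⁷ with the Euclidean metric. If V ⊂ ℝ⁷ is a 4-dimensional linear subspace such that the restriction of φ₀ to V vanishes, then the restriction of the Hodge dual 4-form ∗φ₀ to V is nonzero. -/
open Module

set_option maxHeartbeats 1600000


/-- The alternating 3-form `dx^i ∧ dx^j ∧ dx^k` on `ℝ⁷`, evaluated on three vectors. -/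
def dx3 (i j k : Fin 7) (v w u : Fin 7 → ℝ) : ℝ :=
  Matrix.det !![v i, v j, v k; w i, w j, w k; u i, u j, u k]

/-- The alternating 4-form `dx^i ∧ dx^j ∧ dx^k ∧ dx^l` on `ℝ⁷`. -/
def dx4 (i j k l : Fin 7) (v w u z : Fin 7 → ℝ) : ℝ :=
  Matrix.det !![v i, v j, v k, v l; w i, w j, w k, w l; u i, u j, u k, u l;
                z i, z j, z k, z l]

/-- The standard `G₂` 3-form
`φ₀ = dx¹²³ + dx¹⁴⁵ + dx¹⁶⁷ + dx²⁴⁶ − dx²⁵⁷ − dx³⁴⁷ − dx³⁵⁶` (0-indexed coordinates). -/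
def phi0 (v w u : Fin 7 → ℝ) : ℝ :=
  dx3 0 1 2 v w u + dx3 0 3 4 v w u + dx3 0 5 6 v w u + dx3 1 3 5 v w u
    - dx3 1 4 6 v w u - dx3 2 3 6 v w u - dx3 2 4 5 v w u

/-- The Hodge dual 4-form
`∗φ₀ = dx⁴⁵⁶⁷ + dx²³⁶⁷ + dx²³⁴⁵ + dx¹³⁵⁷ − dx¹³⁴⁶ − dx¹²⁵⁶ − dx¹²⁴⁷`
of `φ₀` with respect to the Euclidean metric and standard orientation on `ℝ⁷`
(0-indexed coordinates). -/
def starPhi0 (v w u z : Fin 7 → ℝ) : ℝ :=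
  dx4 3 4 5 6 v w u z + dx4 1 2 5 6 v w u z + dx4 1 2 3 4 v w u z
    + dx4 0 2 4 6 v w u z - dx4 0 2 3 5 v w u z - dx4 0 1 4 5 v w u z
    - dx4 0 1 3 6 v w u z

lemma dx3_eq (i j k : Fin 7) (v w u : Fin 7 → ℝ) :
    dx3 i j k v w u = v i * (w j * u k - w k * u j) - v j * (w i * u k - w k * u i)
      + v k * (w i * u j - w j * u i) := by
  simp [dx3, Matrix.det_fin_three]; ring
lemma dx4_eq (i j k l : Fin 7) (v w u z : Fin 7 → ℝ) :
    dx4 i j k l v w u z =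
      v i * (w j * (u k * z l - u l * z k) - w k * (u j * z l - u l * z j)
        + w l * (u j * z k - u k * z j))
      - v j * (w i * (u k * z l - u l * z k) - w k * (u i * z l - u l * z i)
        + w l * (u i * z k - u k * z i))
      + v k * (w i * (u j * z l - u l * z j) - w j * (u i * z l - u l * z i)
        + w l * (u i * z j - u j * z i))
      - v l * (w i * (u j * z k - u k * z j) - w j * (u i * z k - u k * z i)
        + w k * (u i * z j - u j * z i)) := by
  simp [dx4, Matrix.det_succ_row_zero, Fin.sum_univ_succ, Matrix.det_fin_three, Fin.succAbove]; ring
def g2cross (v w : Fin 7 → ℝ) : Fin 7 → ℝ :=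
  ![  (v 1 * w 2 - v 2 * w 1) + (v 3 * w 4 - v 4 * w 3) + (v 5 * w 6 - v 6 * w 5),
    - (v 0 * w 2 - v 2 * w 0) + (v 3 * w 5 - v 5 * w 3) - (v 4 * w 6 - v 6 * w 4),
      (v 0 * w 1 - v 1 * w 0) - (v 3 * w 6 - v 6 * w 3) - (v 4 * w 5 - v 5 * w 4),
    - (v 0 * w 4 - v 4 * w 0) - (v 1 * w 5 - v 5 * w 1) + (v 2 * w 6 - v 6 * w 2),
      (v 0 * w 3 - v 3 * w 0) + (v 1 * w 6 - v 6 * w 1) + (v 2 * w 5 - v 5 * w 2),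
    - (v 0 * w 6 - v 6 * w 0) + (v 1 * w 3 - v 3 * w 1) - (v 2 * w 4 - v 4 * w 2),
      (v 0 * w 5 - v 5 * w 0) - (v 1 * w 4 - v 4 * w 1) - (v 2 * w 3 - v 3 * w 2)]
lemma g2cross_apply_0 (v w : Fin 7 → ℝ) : g2cross v w 0 = (v 1 * w 2 - v 2 * w 1) + (v 3 * w 4 - v 4 * w 3) + (v 5 * w 6 - v 6 * w 5) := rfl
lemma g2cross_apply_1 (v w : Fin 7 → ℝ) : g2cross v w 1 = - (v 0 * w 2 - v 2 * w 0) + (v 3 * w 5 - v 5 * w 3) - (v 4 * w 6 - v 6 * w 4) := rfl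
lemma g2cross_apply_2 (v w : Fin 7 → ℝ) : g2cross v w 2 = (v 0 * w 1 - v 1 * w 0) - (v 3 * w 6 - v 6 * w 3) - (v 4 * w 5 - v 5 * w 4) := rfl
lemma g2cross_apply_3 (v w : Fin 7 → ℝ) : g2cross v w 3 = - (v 0 * w 4 - v 4 * w 0) - (v 1 * w 5 - v 5 * w 1) + (v 2 * w 6 - v 6 * w 2) := rfl
lemma g2cross_apply_4 (v w : Fin 7 → ℝ) : g2cross v w 4 = (v 0 * w 3 - v 3 * w 0) + (v 1 * w 6 - v 6 * w 1) + (v 2 * w 5 - v 5 * w 2) := rfl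
lemma g2cross_apply_5 (v w : Fin 7 → ℝ) : g2cross v w 5 = - (v 0 * w 6 - v 6 * w 0) + (v 1 * w 3 - v 3 * w 1) - (v 2 * w 4 - v 4 * w 2) := rfl
lemma g2cross_apply_6 (v w : Fin 7 → ℝ) : g2cross v w 6 = (v 0 * w 5 - v 5 * w 0) - (v 1 * w 4 - v 4 * w 1) - (v 2 * w 3 - v 3 * w 2) := rfl

lemma phi0_eq (v w u : Fin 7 → ℝ) : phi0 v w u = ∑ i, g2cross v w i * u i := by
  simp only [phi0, dx3_eq, Fin.sum_univ_seven, g2cross_apply_0, g2cross_apply_1, g2cross_apply_2,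
    g2cross_apply_3, g2cross_apply_4, g2cross_apply_5, g2cross_apply_6]
  ring

lemma g2cross_dot (v w u z : Fin 7 → ℝ) :
    ∑ i, g2cross v w i * g2cross u z i =
      (∑ i, v i * u i) * (∑ i, w i * z i) - (∑ i, v i * z i) * (∑ i, w i * u i)
        + starPhi0 v w u z := by
  simp only [starPhi0, dx4_eq, Fin.sum_univ_seven, g2cross_apply_0, g2cross_apply_1, g2cross_apply_2,
    g2cross_apply_3, g2cross_apply_4, g2cross_apply_5, g2cross_apply_6]
  ring


/-- If `V ⊂ ℝ⁷` is a 4-dimensional linear subspace on which the standard `G₂` 3-form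
`φ₀` vanishes, then the restriction of `∗φ₀` to `V` is nonzero. -/
theorem starPhi0_ne_zero_on_coassociative (V : Submodule ℝ (Fin 7 → ℝ))
    (hV : Module.finrank ℝ V = 4)
    (hphi : ∀ v w u, v ∈ V → w ∈ V → u ∈ V → phi0 v w u = 0) :
    ∃ v w u z, v ∈ V ∧ w ∈ V ∧ u ∈ V ∧ z ∈ V ∧ starPhi0 v w u z ≠ 0 := by
  by_contra hcon
  push_neg at hcon

  set e : EuclideanSpace ℝ (Fin 7) ≃ₗ[ℝ] (Fin 7 → ℝ) :=
    WithLp.linearEquiv 2 ℝ (Fin 7 → ℝ) with he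
  set V' : Submodule ℝ (EuclideanSpace ℝ (Fin 7)) := V.comap (e : _ →ₗ[ℝ] _) with hV'
  have hmem : ∀ x : EuclideanSpace ℝ (Fin 7), x ∈ V' ↔ e x ∈ V := fun x => Submodule.mem_comap
  have happ : ∀ (x : EuclideanSpace ℝ (Fin 7)) (k : Fin 7), e x k = x k := fun x k => rfl
  have happ2 : ∀ (y : Fin 7 → ℝ) (k : Fin 7), (e.symm y) k = y k := fun x k => rfl
  have h4 : Module.finrank ℝ V' = 4 := by
    rw [hV', Submodule.comap_equiv_eq_map_symm, LinearEquiv.finrank_map_eq]; exact hV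
  have h3 : Module.finrank ℝ V'ᗮ = 3 := by
    have h7 := V'.finrank_add_finrank_orthogonal
    rw [finrank_euclideanSpace_fin] at h7
    omega
  let b : OrthonormalBasis (Fin 4) ℝ V' := (stdOrthonormalBasis ℝ V').reindex (finCongr h4)
  let f : Fin 4 → EuclideanSpace ℝ (Fin 7) := fun i => (b i : _)
  have hfV' : ∀ i, f i ∈ V' := fun i => (b i).2
  have hfV : ∀ i, e (f i) ∈ V := fun i => (hmem _).1 (hfV' i)
  have hinner : ∀ i j, (∑ k, f i k * f j k) = if i = j then (1:ℝ) else 0 := by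
    intro i j
    have hb := b.orthonormal
    rw [orthonormal_iff_ite] at hb
    have h := hb i j
    rw [Submodule.coe_inner, PiLp.inner_apply] at h
    simpa [RCLike.inner_apply, f, mul_comm] using h
  let p : Fin 6 → Fin 4 × Fin 4 := ![(0,1),(0,2),(0,3),(1,2),(1,3),(2,3)]
  let c : Fin 6 → EuclideanSpace ℝ (Fin 7) :=
    fun k => e.symm (g2cross (e (f (p k).1)) (e (f (p k).2)))
  have hcapp : ∀ k j, c k j = g2cross (e (f (p k).1)) (e (f (p k).2)) j := fun k j => rfl
  have hcmem : ∀ k, c k ∈ V'ᗮ := by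
    intro k
    rw [Submodule.mem_orthogonal]
    intro x hx
    rw [PiLp.inner_apply]
    have hterm : ∀ j : Fin 7, (inner ℝ (x j) (c k j) : ℝ)
        = g2cross (e (f (p k).1)) (e (f (p k).2)) j * (e x) j := by
      intro j
      rw [hcapp, happ]
      simp [RCLike.inner_apply]
    rw [Finset.sum_congr rfl fun j _ => hterm j, ← phi0_eq]
    exact hphi _ _ _ (hfV _) (hfV _) ((hmem x).1 hx)
  have hdot : ∀ (i j m n : Fin 4),
      (∑ l, g2cross (e (f i)) (e (f j)) l * g2cross (e (f m)) (e (f n)) l)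
      = (if i = m then (1:ℝ) else 0) * (if j = n then (1:ℝ) else 0)
        - (if i = n then (1:ℝ) else 0) * (if j = m then (1:ℝ) else 0) := by
    intro i j m n
    rw [g2cross_dot]
    have hsum : ∀ a b : Fin 4, (∑ l, (e (f a)) l * (e (f b)) l) = if a = b then (1:ℝ) else 0 := by
      intro a b
      rw [← hinner a b]
      exact Finset.sum_congr rfl fun l _ => by rw [happ, happ]
    rw [hsum, hsum, hsum, hsum, hcon _ _ _ _ (hfV i) (hfV j) (hfV m) (hfV n), add_zero]
  have honc : Orthonormal ℝ c := by
    rw [orthonormal_iff_ite]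
    intro k l
    rw [PiLp.inner_apply]
    have hterm : ∀ j : Fin 7, (inner ℝ (c k j) (c l j) : ℝ)
        = g2cross (e (f (p k).1)) (e (f (p k).2)) j * g2cross (e (f (p l).1)) (e (f (p l).2)) j := by
      intro j; rw [hcapp, hcapp]; simp [RCLike.inner_apply]; ring
    rw [Finset.sum_congr rfl fun j _ => hterm j, hdot]
    fin_cases k <;> fin_cases l <;> norm_num [p, Fin.ext_iff] <;> decide
  have hli : LinearIndependent ℝ c := honc.linearIndependent
  let c' : Fin 6 → V'ᗮ := fun k => ⟨c k, hcmem k⟩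
  have hli' : LinearIndependent ℝ c' :=
    LinearIndependent.of_comp (V'ᗮ).subtype hli
  have h6 : 6 ≤ Module.finrank ℝ V'ᗮ := by
    simpa using hli'.fintype_card_le_finrank
  omega
end

section
/- With α, β, γ as above, each of α, β, γ preserves the standard flat G₂ 3-form φ₀ = dx¹²³ + dx¹⁴⁵ + dx¹⁶⁷ + dx²⁴⁶ − dx²⁵⁷ − dx³⁴⁷ − dx³⁵⁶ on T⁷, i.e. α*φ₀ = β*φ₀ = γ*φ₀ = φ₀. -/
/-- Linear part of `α`: negates `x₄,…,x₇` (0-indexed `3,4,5,6`). -/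
def Lalpha (x : Fin 7 → ℝ) : Fin 7 → ℝ := ![x 0, x 1, x 2, -x 3, -x 4, -x 5, -x 6]

/-- Linear part of `β`: negates `x₂, x₃, x₆, x₇` (0-indexed `1,2,5,6`). -/
def Lbeta (x : Fin 7 → ℝ) : Fin 7 → ℝ := ![x 0, -x 1, -x 2, x 3, x 4, -x 5, -x 6]

/-- Linear part of `γ`: negates `x₁, x₃, x₅, x₇` (0-indexed `0,2,4,6`). -/
def Lgamma (x : Fin 7 → ℝ) : Fin 7 → ℝ := ![-x 0, x 1, -x 2, x 3, -x 4, x 5, -x 6]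

lemma Lalpha_0 (x : Fin 7 → ℝ) : Lalpha x 0 = x 0 := rfl
lemma Lalpha_1 (x : Fin 7 → ℝ) : Lalpha x 1 = x 1 := rfl
lemma Lalpha_2 (x : Fin 7 → ℝ) : Lalpha x 2 = x 2 := rfl
lemma Lalpha_3 (x : Fin 7 → ℝ) : Lalpha x 3 = -x 3 := rfl
lemma Lalpha_4 (x : Fin 7 → ℝ) : Lalpha x 4 = -x 4 := rfl
lemma Lalpha_5 (x : Fin 7 → ℝ) : Lalpha x 5 = -x 5 := rfl
lemma Lalpha_6 (x : Fin 7 → ℝ) : Lalpha x 6 = -x 6 := rfl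
lemma Lbeta_0 (x : Fin 7 → ℝ) : Lbeta x 0 = x 0 := rfl
lemma Lbeta_1 (x : Fin 7 → ℝ) : Lbeta x 1 = -x 1 := rfl
lemma Lbeta_2 (x : Fin 7 → ℝ) : Lbeta x 2 = -x 2 := rfl
lemma Lbeta_3 (x : Fin 7 → ℝ) : Lbeta x 3 = x 3 := rfl
lemma Lbeta_4 (x : Fin 7 → ℝ) : Lbeta x 4 = x 4 := rfl
lemma Lbeta_5 (x : Fin 7 → ℝ) : Lbeta x 5 = -x 5 := rfl
lemma Lbeta_6 (x : Fin 7 → ℝ) : Lbeta x 6 = -x 6 := rfl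
lemma Lgamma_0 (x : Fin 7 → ℝ) : Lgamma x 0 = -x 0 := rfl
lemma Lgamma_1 (x : Fin 7 → ℝ) : Lgamma x 1 = x 1 := rfl
lemma Lgamma_2 (x : Fin 7 → ℝ) : Lgamma x 2 = -x 2 := rfl
lemma Lgamma_3 (x : Fin 7 → ℝ) : Lgamma x 3 = x 3 := rfl
lemma Lgamma_4 (x : Fin 7 → ℝ) : Lgamma x 4 = -x 4 := rfl
lemma Lgamma_5 (x : Fin 7 → ℝ) : Lgamma x 5 = x 5 := rfl
lemma Lgamma_6 (x : Fin 7 → ℝ) : Lgamma x 6 = -x 6 := rfl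

lemma vec7_five {α : Type*} (a₀ a₁ a₂ a₃ a₄ a₅ a₆ : α) :
    ![a₀, a₁, a₂, a₃, a₄, a₅, a₆] 5 = a₅ := rfl

lemma vec7_six {α : Type*} (a₀ a₁ a₂ a₃ a₄ a₅ a₆ : α) :
    ![a₀, a₁, a₂, a₃, a₄, a₅, a₆] 6 = a₆ := rfl

set_option maxHeartbeats 2000000 in
/-- Each of the affine involutions `α, β, γ` of `T⁷` preserves the translation-invariant
`G₂` 3-form `φ₀`: since `φ₀` has constant coefficients this says exactly that their
linear parts preserve `φ₀` on `ℝ⁷`. -/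
theorem alpha_beta_gamma_preserve_phi0 :
    (∀ v w u, phi0 (Lalpha v) (Lalpha w) (Lalpha u) = phi0 v w u) ∧
    (∀ v w u, phi0 (Lbeta v) (Lbeta w) (Lbeta u) = phi0 v w u) ∧
    (∀ v w u, phi0 (Lgamma v) (Lgamma w) (Lgamma u) = phi0 v w u) := by
  refine ⟨fun v w u => ?_, fun v w u => ?_, fun v w u => ?_⟩ <;>
    simp [phi0, dx3, Matrix.det_fin_three,
      Lalpha_0, Lalpha_1, Lalpha_2, Lalpha_3, Lalpha_4, Lalpha_5, Lalpha_6,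
      Lbeta_0, Lbeta_1, Lbeta_2, Lbeta_3, Lbeta_4, Lbeta_5, Lbeta_6,
      Lgamma_0, Lgamma_1, Lgamma_2, Lgamma_3, Lgamma_4, Lgamma_5, Lgamma_6]
end

section
/- Let X be a Banach space, B₊, B₋ closed subspaces with X = B₊ ⊕ B₋, and let x(t) = x₊(t) + x₋(t) be a continuously differentiable path in X defined for t ≥ t₀ with x(t) → 0 as t → ∞. Suppose there are constants μ > 2k > 0 such that for all t ≥ t₀: (d/dt)‖x₊(t)‖ ≥ μ‖x₊(t)‖ − k‖x(t)‖ and (d/dt)‖x₋(t)‖ ≤ −μ‖x₋(t)‖ + k‖x(t)‖ wherever these norms are differentiable, and ‖x(t)‖ ≤ ‖x₊(t)‖ + ‖x₋(t)‖. Then ‖x(t)‖ = O(e^{(−μ+2k)t}) as t → ∞. -/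
open Filter

set_option maxHeartbeats 1000000 in
/-- Abstract exponential decay for a flow near a hyperbolic fixed point.
Let `X` be a Banach space, `B₊, B₋` closed complementary subspaces, and
`x(t) = x₊(t) + x₋(t)` a path defined for `t ≥ t₀` with `x(t) → 0` as `t → ∞`.
Suppose `μ > 2k > 0` and the norms satisfy `(d/dt)‖x₊‖ ≥ μ‖x₊‖ − k‖x‖`,
`(d/dt)‖x₋‖ ≤ −μ‖x₋‖ + k‖x‖` and `‖x‖ ≤ ‖x₊‖ + ‖x₋‖`.
Then `‖x(t)‖ = O(e^{(−μ+2k)t})` as `t → ∞`. -/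
theorem exponential_decay_hyperbolic_flow
    {X : Type*} [NormedAddCommGroup X] [NormedSpace ℝ X] [CompleteSpace X]
    (Bp Bm : Submodule ℝ X) (hBp : IsClosed (Bp : Set X)) (hBm : IsClosed (Bm : Set X))
    (hcompl : IsCompl Bp Bm)
    (μ k t₀ : ℝ) (hk : 0 < k) (hμ : 2 * k < μ)
    (x xp xm : ℝ → X) (np nm : ℝ → ℝ)
    (hmemp : ∀ t, t₀ ≤ t → xp t ∈ Bp) (hmemm : ∀ t, t₀ ≤ t → xm t ∈ Bm)
    (hsum : ∀ t, t₀ ≤ t → x t = xp t + xm t)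
    (hC1 : ContDiffOn ℝ 1 x (Set.Ici t₀))
    (hlim : Tendsto x atTop (nhds 0))
    (hdp : ∀ t, t₀ ≤ t → HasDerivAt (fun u => ‖xp u‖) (np t) t)
    (hdm : ∀ t, t₀ ≤ t → HasDerivAt (fun u => ‖xm u‖) (nm t) t)
    (hineqp : ∀ t, t₀ ≤ t → μ * ‖xp t‖ - k * ‖x t‖ ≤ np t)
    (hineqm : ∀ t, t₀ ≤ t → nm t ≤ -μ * ‖xm t‖ + k * ‖x t‖)
    (htri : ∀ t, t₀ ≤ t → ‖x t‖ ≤ ‖xp t‖ + ‖xm t‖) :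
    ∃ C : ℝ, ∀ t, t₀ ≤ t → ‖x t‖ ≤ C * Real.exp ((-μ + 2 * k) * t) := by
  have hμk : (0:ℝ) ≤ μ - 2 * k := by linarith
  -- the continuous projection onto Bp along Bm
  set P := Bp.linearProjOfClosedCompl Bm hcompl hBp hBm with hP
  have hPx : ∀ t, t₀ ≤ t → (P (x t) : X) = xp t := by
    intro t ht
    have : P (x t) = (⟨xp t, hmemp t ht⟩ : Bp) := by
      rw [hsum t ht]
      have : (P : X →ₗ[ℝ] Bp) = Bp.projectionOnto Bm hcompl :=
        Submodule.coe_continuous_linearProjOfClosedCompl hcompl hBp hBm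
      calc P (xp t + xm t) = Bp.projectionOnto Bm hcompl (xp t + xm t) := by
            rw [← this]; rfl
        _ = ⟨xp t, hmemp t ht⟩ := by
            rw [map_add, Submodule.projectionOnto_apply_of_mem_right hcompl (hmemm t ht),
              add_zero]
            exact Submodule.projectionOnto_apply_left hcompl ⟨xp t, hmemp t ht⟩
    rw [this]
  -- xp and xm tend to 0
  have hxp_lim : Tendsto (fun t => ‖xp t‖) atTop (nhds 0) := by
    have h1 : Tendsto (fun t => ‖(P (x t) : X)‖) atTop (nhds 0) := by
      have := (P.continuous.tendsto 0).comp hlim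
      simpa using ((continuous_subtype_val.tendsto _).comp this).norm
    refine h1.congr' ?_
    filter_upwards [eventually_ge_atTop t₀] with t ht
    rw [hPx t ht]
  have hxm_lim : Tendsto (fun t => ‖xm t‖) atTop (nhds 0) := by
    have h1 : Tendsto (fun t => ‖x t - (P (x t) : X)‖) atTop (nhds 0) := by
      have h2 : Tendsto (fun t => (P (x t) : X)) atTop (nhds 0) := by
        have := (P.continuous.tendsto 0).comp hlim
        simpa [Function.comp_def] using (continuous_subtype_val.tendsto _).comp this
      simpa using (hlim.sub h2).norm
    refine h1.congr' ?_
    filter_upwards [eventually_ge_atTop t₀] with t ht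
    rw [hPx t ht, hsum t ht, add_sub_cancel_left]
  -- f = ‖xp‖ - ‖xm‖ is monotone on Ici t₀
  set f : ℝ → ℝ := fun t => ‖xp t‖ - ‖xm t‖ with hf
  have hfd : ∀ t, t₀ ≤ t → HasDerivAt f (np t - nm t) t := fun t ht =>
    (hdp t ht).sub (hdm t ht)
  have hmono : MonotoneOn f (Set.Ici t₀) := by
    apply monotoneOn_of_deriv_nonneg (convex_Ici t₀)
    · exact fun t ht => ((hfd t ht).continuousAt).continuousWithinAt
    · intro t ht
      rw [interior_Ici] at ht
      exact ((hfd t (le_of_lt ht)).differentiableAt).differentiableWithinAt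
    · intro t ht
      rw [interior_Ici] at ht
      have ht' : t₀ ≤ t := le_of_lt ht
      rw [(hfd t ht').deriv]
      have h1 := hineqp t ht'
      have h2 := hineqm t ht'
      have h3 := htri t ht'
      have h4 : (0:ℝ) ≤ ‖xp t‖ + ‖xm t‖ := by positivity
      nlinarith [norm_nonneg (x t)]
  -- f ≤ 0 on Ici t₀
  have hfle : ∀ t, t₀ ≤ t → f t ≤ 0 := by
    intro t ht
    have hflim : Tendsto f atTop (nhds 0) := by
      simpa using hxp_lim.sub hxm_lim
    refine ge_of_tendsto hflim ?_
    filter_upwards [eventually_ge_atTop t] with s hs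
    exact hmono ht (le_trans ht hs) hs
  -- hence ‖x t‖ ≤ 2 ‖xm t‖
  have hx2 : ∀ t, t₀ ≤ t → ‖x t‖ ≤ 2 * ‖xm t‖ := by
    intro t ht
    have := hfle t ht
    have := htri t ht
    simp only [hf] at *
    linarith
  -- h = ‖xm‖ * exp((μ - 2k) t) is antitone
  set g : ℝ → ℝ := fun t => ‖xm t‖ * Real.exp ((μ - 2 * k) * t) with hg
  have hgd : ∀ t, t₀ ≤ t →
      HasDerivAt g (nm t * Real.exp ((μ - 2 * k) * t)
        + ‖xm t‖ * ((μ - 2 * k) * Real.exp ((μ - 2 * k) * t))) t := by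
    intro t ht
    have he : HasDerivAt (fun u => Real.exp ((μ - 2 * k) * u))
        ((μ - 2 * k) * Real.exp ((μ - 2 * k) * t)) t := by
      have h0 := ((hasDerivAt_id t).const_mul (μ - 2 * k)).exp
      simp only [id_eq] at h0
      convert h0 using 1
      ring
    exact (hdm t ht).mul he
  have hanti : AntitoneOn g (Set.Ici t₀) := by
    apply antitoneOn_of_deriv_nonpos (convex_Ici t₀)
    · exact fun t ht => ((hgd t ht).continuousAt).continuousWithinAt
    · intro t ht
      rw [interior_Ici] at ht
      exact ((hgd t (le_of_lt ht)).differentiableAt).differentiableWithinAt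
    · intro t ht
      rw [interior_Ici] at ht
      have ht' : t₀ ≤ t := le_of_lt ht
      rw [(hgd t ht').deriv]
      have h2 := hineqm t ht'
      have h3 := hx2 t ht'
      have he : (0:ℝ) < Real.exp ((μ - 2 * k) * t) := Real.exp_pos _
      have key : nm t + ‖xm t‖ * (μ - 2 * k) ≤ 0 := by
        have h4 : k * ‖x t‖ ≤ k * (2 * ‖xm t‖) := mul_le_mul_of_nonneg_left h3 hk.le
        linarith
      have h5 : (nm t + ‖xm t‖ * (μ - 2 * k)) * Real.exp ((μ - 2 * k) * t) ≤ 0 :=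
        mul_nonpos_iff.mpr (Or.inr ⟨key, he.le⟩)
      have h6 : nm t * Real.exp ((μ - 2 * k) * t)
          + ‖xm t‖ * ((μ - 2 * k) * Real.exp ((μ - 2 * k) * t))
          = (nm t + ‖xm t‖ * (μ - 2 * k)) * Real.exp ((μ - 2 * k) * t) := by ring
      rw [h6]
      exact h5
  -- conclude
  refine ⟨2 * ‖xm t₀‖ * Real.exp ((μ - 2 * k) * t₀), ?_⟩
  intro t ht
  have hgt : g t ≤ g t₀ := hanti Set.self_mem_Ici ht ht
  have he : (0:ℝ) < Real.exp ((μ - 2 * k) * t) := Real.exp_pos _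
  have h1 : ‖xm t‖ ≤ ‖xm t₀‖ * Real.exp ((μ - 2 * k) * t₀) / Real.exp ((μ - 2 * k) * t) := by
    rw [le_div_iff₀ he]
    simpa [hg] using hgt
  have h2 := hx2 t ht
  have hexp : Real.exp ((-μ + 2 * k) * t) = (Real.exp ((μ - 2 * k) * t))⁻¹ := by
    rw [← Real.exp_neg]; ring_nf
  rw [hexp]
  rw [div_eq_mul_inv] at h1
  calc ‖x t‖ ≤ 2 * ‖xm t‖ := h2
    _ ≤ 2 * (‖xm t₀‖ * Real.exp ((μ - 2 * k) * t₀) * (Real.exp ((μ - 2 * k) * t))⁻¹) := by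
        linarith
    _ = 2 * ‖xm t₀‖ * Real.exp ((μ - 2 * k) * t₀) * (Real.exp ((μ - 2 * k) * t))⁻¹ := by ring
end
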